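/- arXiv:2206.00514 — 2 statements merged into one kernel-verified Lean document; each statement's English description precedes it below -/
import Mathlib

section
/- For any n×n real matrix A of full rank and any 1 ≤ i ≤ n−1, the quantities t_{i,k}(A) satisfy t_{i,1}(A) + t_{i,2}(A) + ⋯ + t_{i,n}(A) = n − i. -/
open MeasureTheory ProbabilityTheory Matrix Filter Topology

noncomputable section

/-- The standard Gaussian measure on `ℝ^d` (modeled on `Fin d → ℝ`). -/
def gaussianPi (d : ℕ) : Measure (Fin d → ℝ) :=
  Measure.pi fun _ => gaussianReal 0 1

/-- The Euclidean norm on `Fin n → ℝ`. -/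
def euclidNorm {n : ℕ} (x : Fin n → ℝ) : ℝ :=
  Real.sqrt (∑ j, x j ^ 2)

/-- The uniform distribution on the unit sphere `S^{n-1} ⊆ ℝ^n`, realized as the law of a
normalized standard Gaussian vector. -/
def uniformSphere (n : ℕ) : Measure (Fin n → ℝ) :=
  (gaussianPi n).map fun x => (euclidNorm x)⁻¹ • x

/-- `lam` is the (decreasingly) ordered enumeration of the eigenvalues of the symmetric
matrix `M`. -/
def IsOrderedEigenvalues {n : ℕ} (M : Matrix (Fin n) (Fin n) ℝ) (lam : Fin n → ℝ) : Prop :=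
  Antitone lam ∧ ∃ (hM : M.IsHermitian) (σ : Equiv.Perm (Fin n)), lam = hM.eigenvalues ∘ σ

/-- The quantity `t_{i,k}(A)`, expressed in terms of the eigenvalues `lam` of `AAᵀ`:
`t_{i,k} = E[1/(1 + λ_k w_{ik}ᵀ (∑_{ℓ≠k} λ_ℓ w_{iℓ} w_{iℓ}ᵀ)⁻¹ w_{ik})]`, where
`w_{i1},…,w_{in}` are i.i.d. standard Gaussian vectors in `ℝ^i`. -/
def tval (i : ℕ) {n : ℕ} (lam : Fin n → ℝ) (k : Fin n) : ℝ :=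
  ∫ w : Fin n → Fin i → ℝ,
    (1 + lam k *
        (w k ⬝ᵥ ((∑ l ∈ Finset.univ.erase k,
            lam l • Matrix.vecMulVec (w l) (w l))⁻¹).mulVec (w k)))⁻¹
    ∂(Measure.pi fun _ : Fin n => gaussianPi i)

/-- The variance `σ_n²` from Theorem 2.1:
`σ_n² = −2p/n + 2 ∑_{i=1}^{p−1} (∑_k λ_k² t_{i,k})/(∑_k λ_k t_{i,k})²`. -/
def sigmaSq (n p : ℕ) (lam : Fin n → ℝ) : ℝ :=
  -2 * (p : ℝ) / (n : ℝ) + 2 * ∑ i ∈ Finset.Ico 1 p,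
    (∑ k, lam k ^ 2 * tval i lam k) / (∑ k, lam k * tval i lam k) ^ 2

/-- The centering `μ_n` from Theorem 2.1:
`μ_n = log tr(AAᵀ) − p log n − σ_n²/2 + ∑_{i=1}^{p−1} log(∑_k λ_k t_{i,k})`. -/
def muSeq (n p : ℕ) (A : Matrix (Fin n) (Fin n) ℝ) (lam : Fin n → ℝ) : ℝ :=
  Real.log (Matrix.trace (A * Aᵀ)) - (p : ℝ) * Real.log (n : ℝ) - sigmaSq n p lam / 2
    + ∑ i ∈ Finset.Ico 1 p, Real.log (∑ k, lam k * tval i lam k)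

end


namespace TvalSum

variable {d m : ℕ}

lemma vecMulVec_mulVec' (u v x : Fin d → ℝ) :
    Matrix.vecMulVec u v *ᵥ x = (v ⬝ᵥ x) • u := by
  ext a
  simp only [Matrix.mulVec, Matrix.vecMulVec_apply, dotProduct, Pi.smul_apply,
    smul_eq_mul, Finset.sum_mul]
  exact Finset.sum_congr rfl fun b _ => by ring

lemma dot_vecMulVec (u x : Fin d → ℝ) :
    x ⬝ᵥ Matrix.vecMulVec u u *ᵥ x = (u ⬝ᵥ x) ^ 2 := by
  rw [vecMulVec_mulVec', dotProduct_smul, smul_eq_mul, dotProduct_comm, sq]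

lemma dot_sum_smul_vecMulVec {κ : Type*} [DecidableEq κ] (s : Finset κ) (c : κ → ℝ)
    (w : κ → Fin d → ℝ) (x : Fin d → ℝ) :
    x ⬝ᵥ (∑ l ∈ s, c l • Matrix.vecMulVec (w l) (w l)) *ᵥ x
      = ∑ l ∈ s, c l * (w l ⬝ᵥ x) ^ 2 := by
  induction s using Finset.induction with
  | empty => simp [Matrix.mulVec]
  | insert _ _ h ih =>
      rw [Finset.sum_insert h, Finset.sum_insert h, Matrix.add_mulVec, dotProduct_add, ih,
        Matrix.smul_mulVec, dotProduct_smul, smul_eq_mul, dot_vecMulVec]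

lemma isHermitian_sum_smul {κ : Type*} (s : Finset κ) (c : κ → ℝ) (w : κ → Fin d → ℝ) :
    (∑ l ∈ s, c l • Matrix.vecMulVec (w l) (w l)).IsHermitian := by
  unfold Matrix.IsHermitian
  ext a b
  simp only [Matrix.conjTranspose_apply, Matrix.sum_apply, Pi.smul_apply,
    Matrix.smul_apply, Matrix.vecMulVec_apply, smul_eq_mul, star_trivial]
  exact Finset.sum_congr rfl fun l _ => by ring

lemma posSemidef_sum_smul {κ : Type*} [DecidableEq κ] (s : Finset κ) {c : κ → ℝ}
    (hc : ∀ j ∈ s, 0 ≤ c j) (w : κ → Fin d → ℝ) :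
    (∑ l ∈ s, c l • Matrix.vecMulVec (w l) (w l)).PosSemidef := by
  refine Matrix.PosSemidef.of_dotProduct_mulVec_nonneg (isHermitian_sum_smul s c w) fun x => ?_
  rw [star_trivial, dot_sum_smul_vecMulVec]
  exact Finset.sum_nonneg fun l hl => mul_nonneg (hc l hl) (sq_nonneg _)

lemma eq_zero_of_dot_eq_zero {κ : Type*} {w : κ → Fin d → ℝ}
    (h : Submodule.span ℝ (Set.range w) = ⊤) {x : Fin d → ℝ}
    (hx : ∀ j, w j ⬝ᵥ x = 0) : x = 0 := by
  have hs : ∀ y ∈ Submodule.span ℝ (Set.range w), y ⬝ᵥ x = 0 := by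
    intro y hy
    induction hy using Submodule.span_induction with
    | mem y hy => obtain ⟨j, rfl⟩ := hy; exact hx j
    | zero => simp
    | add y z _ _ hy hz => rw [add_dotProduct, hy, hz, add_zero]
    | smul c y _ hy => rw [smul_dotProduct, hy, smul_zero]
  have := hs x (h ▸ Submodule.mem_top)
  rwa [dotProduct_self_eq_zero] at this

lemma posDef_sum_smul_of_span {κ : Type*} [Fintype κ] [DecidableEq κ] {c : κ → ℝ}
    (hc : ∀ j, 0 < c j) {w : κ → Fin d → ℝ}
    (h : Submodule.span ℝ (Set.range w) = ⊤) :
    (∑ l, c l • Matrix.vecMulVec (w l) (w l)).PosDef := by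
  refine Matrix.PosDef.of_dotProduct_mulVec_pos (isHermitian_sum_smul _ c w) fun x hx => ?_
  rw [star_trivial, dot_sum_smul_vecMulVec]
  have hex : ∃ j, w j ⬝ᵥ x ≠ 0 := by
    by_contra hcon
    push_neg at hcon
    exact hx (eq_zero_of_dot_eq_zero h hcon)
  obtain ⟨j, hj⟩ := hex
  exact Finset.sum_pos' (fun l _ => mul_nonneg (hc l).le (sq_nonneg _))
    ⟨j, Finset.mem_univ j, mul_pos (hc j) (by positivity)⟩

lemma symm_dot {M : Matrix (Fin d) (Fin d) ℝ} (hM : M.IsHermitian) (u v : Fin d → ℝ) :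
    u ⬝ᵥ M *ᵥ v = v ⬝ᵥ M *ᵥ u := by
  have hMt : Mᵀ = M := by
    ext a b
    have := congrFun (congrFun hM a) b
    simpa [Matrix.conjTranspose_apply] using this
  calc u ⬝ᵥ M *ᵥ v = (u ᵥ* M) ⬝ᵥ v := dotProduct_mulVec u M v
    _ = (M *ᵥ u) ⬝ᵥ v := by rw [← vecMul_transpose, hMt]
    _ = v ⬝ᵥ M *ᵥ u := dotProduct_comm _ _

lemma mulVec_eq_zero_of_quad_eq_zero {M : Matrix (Fin d) (Fin d) ℝ} (hM : M.PosSemidef)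
    {x : Fin d → ℝ} (hx : x ⬝ᵥ M *ᵥ x = 0) : M *ᵥ x = 0 := by
  have h2 : x ⬝ᵥ M *ᵥ (M *ᵥ x) = (M *ᵥ x) ⬝ᵥ (M *ᵥ x) := symm_dot hM.1 x (M *ᵥ x)
  have key : ∀ t : ℝ, 0 ≤ t ^ 2 * ((M *ᵥ x) ⬝ᵥ M *ᵥ (M *ᵥ x)) + 2 * t * ((M *ᵥ x) ⬝ᵥ (M *ᵥ x)) := by
    intro t
    have h0 := hM.dotProduct_mulVec_nonneg (x + t • (M *ᵥ x))
    rw [star_trivial] at h0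
    simp only [mulVec_add, mulVec_smul, add_dotProduct, dotProduct_add, smul_dotProduct,
      dotProduct_smul, smul_eq_mul, hx, h2] at h0
    nlinarith [h0]
  set a := (M *ᵥ x) ⬝ᵥ M *ᵥ (M *ᵥ x) with ha
  set c := (M *ᵥ x) ⬝ᵥ (M *ᵥ x) with hc
  have ha0 : 0 ≤ a := by
    have h5 := hM.dotProduct_mulVec_nonneg (M *ᵥ x)
    rw [star_trivial] at h5
    rw [ha]
    exact h5
  have hc0 : c = 0 := by
    by_contra hcne
    have h := key (-(c / (a + 1)))
    have hapos : (0:ℝ) < a + 1 := by linarith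
    have hcsq : 0 < c ^ 2 := by positivity
    have heq : (-(c / (a + 1))) ^ 2 * a + 2 * (-(c / (a + 1))) * c
        = (c ^ 2 * a - 2 * c ^ 2 * (a + 1)) / (a + 1) ^ 2 := by
      field_simp
      ring
    rw [heq] at h
    have h2' : 0 ≤ c ^ 2 * a - 2 * c ^ 2 * (a + 1) := by
      by_contra hneg
      push_neg at hneg
      have : (c ^ 2 * a - 2 * c ^ 2 * (a + 1)) / (a + 1) ^ 2 < 0 :=
        div_neg_of_neg_of_pos hneg (by positivity)
      linarith
    nlinarith
  have : (M *ᵥ x) ⬝ᵥ (M *ᵥ x) = 0 := hc0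
  rwa [dotProduct_self_eq_zero] at this

lemma posDef_of_posSemidef_det_ne_zero {M : Matrix (Fin d) (Fin d) ℝ} (hM : M.PosSemidef)
    (hd : M.det ≠ 0) : M.PosDef := by
  refine Matrix.PosDef.of_dotProduct_mulVec_pos hM.1 fun x hx => ?_
  rw [star_trivial]
  rcases (hM.dotProduct_mulVec_nonneg x).lt_or_eq with h | h
  · rwa [star_trivial] at h
  · exfalso
    apply hd
    rw [← Matrix.exists_mulVec_eq_zero_iff]
    exact ⟨x, hx, mulVec_eq_zero_of_quad_eq_zero hM (by rw [star_trivial] at h; exact h.symm)⟩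

lemma sum_dotProduct' {κ : Type*} (s : Finset κ) (f : κ → Fin d → ℝ) (x : Fin d → ℝ) :
    (∑ j ∈ s, f j) ⬝ᵥ x = ∑ j ∈ s, f j ⬝ᵥ x := by
  induction s using Finset.cons_induction with
  | empty => simp [dotProduct]
  | cons a s ha ih => rw [Finset.sum_cons, Finset.sum_cons, add_dotProduct, ih]

/-- Gram matrix of a tuple of vectors. -/
def gram1 (w : Fin m → Fin d → ℝ) : Matrix (Fin m) (Fin m) ℝ :=
  Matrix.of fun j j' => w j ⬝ᵥ w j'

/-- Second moment matrix of a tuple of vectors. -/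
def gram2 (w : Fin m → Fin d → ℝ) : Matrix (Fin d) (Fin d) ℝ :=
  ∑ j, Matrix.vecMulVec (w j) (w j)

lemma gram1_mulVec (w : Fin m → Fin d → ℝ) (c : Fin m → ℝ) (j : Fin m) :
    (gram1 w *ᵥ c) j = w j ⬝ᵥ (∑ j', c j' • w j') := by
  simp only [gram1, Matrix.mulVec, Matrix.of_apply, dotProduct, Finset.sum_apply,
    Pi.smul_apply, smul_eq_mul, Finset.mul_sum, Finset.sum_mul]
  rw [Finset.sum_comm]
  refine Finset.sum_congr rfl fun j' _ => Finset.sum_congr rfl fun b _ => by ring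

lemma linearIndependent_iff_gram1 (w : Fin m → Fin d → ℝ) :
    LinearIndependent ℝ w ↔ (gram1 w).det ≠ 0 := by
  constructor
  · intro hind hdet
    obtain ⟨c, hc0, hcv⟩ := (Matrix.exists_mulVec_eq_zero_iff).mpr hdet
    have h1 : ∀ j, w j ⬝ᵥ (∑ j', c j' • w j') = 0 := fun j => by
      rw [← gram1_mulVec, hcv]
      rfl
    have hu : (∑ j', c j' • w j') ⬝ᵥ (∑ j', c j' • w j') = 0 := by
      rw [sum_dotProduct']
      refine Finset.sum_eq_zero fun j _ => ?_
      rw [smul_dotProduct, h1 j, smul_zero]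
    rw [dotProduct_self_eq_zero] at hu
    exact hc0 (funext (Fintype.linearIndependent_iff.mp hind c hu))
  · intro hdet
    rw [Fintype.linearIndependent_iff]
    intro c hc
    by_contra hne
    push_neg at hne
    obtain ⟨j0, hj0⟩ := hne
    apply hdet
    rw [← Matrix.exists_mulVec_eq_zero_iff]
    refine ⟨c, fun h0 => hj0 (congrFun h0 j0), ?_⟩
    ext j
    rw [gram1_mulVec, hc, dotProduct_zero]
    rfl

lemma gram2_eq_sum_smul (w : Fin m → Fin d → ℝ) :
    gram2 w = ∑ j, (1:ℝ) • Matrix.vecMulVec (w j) (w j) := by simp [gram2]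

lemma gram2_posSemidef (w : Fin m → Fin d → ℝ) : (gram2 w).PosSemidef := by
  rw [gram2_eq_sum_smul]
  exact posSemidef_sum_smul _ (fun _ _ => zero_le_one) _

lemma dot_gram2 (w : Fin m → Fin d → ℝ) (x : Fin d → ℝ) :
    x ⬝ᵥ gram2 w *ᵥ x = ∑ j, (w j ⬝ᵥ x) ^ 2 := by
  rw [gram2_eq_sum_smul, dot_sum_smul_vecMulVec]
  simp

lemma gram2_det_ne_zero_of_span {w : Fin m → Fin d → ℝ}
    (hsp : Submodule.span ℝ (Set.range w) = ⊤) : (gram2 w).det ≠ 0 := by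
  have hpd : (gram2 w).PosDef := by
    rw [gram2_eq_sum_smul]
    exact posDef_sum_smul_of_span (fun _ => one_pos) hsp
  exact hpd.det_pos.ne'

lemma gram2_cons (v : Fin d → ℝ) (w : Fin m → Fin d → ℝ) :
    gram2 (Fin.cons v w) = Matrix.vecMulVec v v + gram2 w := by
  unfold gram2
  rw [Fin.sum_univ_succ]
  simp [Fin.cons_zero, Fin.cons_succ]

lemma posSemidef_vecMulVec (v : Fin d → ℝ) : (Matrix.vecMulVec v v).PosSemidef := by
  refine Matrix.PosSemidef.of_dotProduct_mulVec_nonneg ?_ ?_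
  · unfold Matrix.IsHermitian
    ext a b
    simp only [Matrix.conjTranspose_apply, Matrix.vecMulVec_apply, star_trivial]
    ring
  · intro x
    rw [star_trivial, dot_vecMulVec]
    exact sq_nonneg _

lemma det_add_psd_ne_zero {M N : Matrix (Fin d) (Fin d) ℝ} (hM : M.PosSemidef)
    (hMd : M.det ≠ 0) (hN : N.PosSemidef) : (N + M).det ≠ 0 := by
  intro h
  obtain ⟨x, hx0, hxv⟩ := Matrix.exists_mulVec_eq_zero_iff.mpr h
  have hq : x ⬝ᵥ (N + M) *ᵥ x = 0 := by rw [hxv, dotProduct_zero]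
  rw [Matrix.add_mulVec, dotProduct_add] at hq
  have hNq := hN.dotProduct_mulVec_nonneg x
  rw [star_trivial] at hNq
  have hMq := hM.dotProduct_mulVec_nonneg x
  rw [star_trivial] at hMq
  have hM0 : x ⬝ᵥ M *ᵥ x = 0 := le_antisymm (by linarith) hMq
  exact hMd (Matrix.exists_mulVec_eq_zero_iff.mp
    ⟨x, hx0, mulVec_eq_zero_of_quad_eq_zero hM hM0⟩)

/-- The good predicate carried through the induction. -/
def goodPred (d m : ℕ) (w : Fin m → Fin d → ℝ) : Prop :=
  (gram1 w).det ≠ 0 ∨ (gram2 w).det ≠ 0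

lemma goodPred_cons_of_gram2 {v : Fin d → ℝ} {w : Fin m → Fin d → ℝ}
    (h : (gram2 w).det ≠ 0) : goodPred d (m + 1) (Fin.cons v w) :=
  Or.inr (by
    rw [gram2_cons]
    exact det_add_psd_ne_zero (gram2_posSemidef w) h (posSemidef_vecMulVec v))

lemma continuous_gram1_det :
    Continuous fun w : Fin m → Fin d → ℝ => (gram1 w).det := by
  apply Continuous.matrix_det
  apply continuous_pi; intro j
  apply continuous_pi; intro j'
  show Continuous fun w : Fin m → Fin d → ℝ => ∑ b, w j b * w j' b
  exact continuous_finset_sum _ fun b _ => by fun_prop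

lemma continuous_gram2_det :
    Continuous fun w : Fin m → Fin d → ℝ => (gram2 w).det := by
  apply Continuous.matrix_det
  apply continuous_pi; intro a
  apply continuous_pi; intro b
  have h : (fun w : Fin m → Fin d → ℝ => gram2 w a b) = fun w => ∑ j, w j a * w j b := by
    funext w
    simp [gram2, Matrix.sum_apply, Matrix.vecMulVec_apply]
  show Continuous fun w : Fin m → Fin d → ℝ => gram2 w a b
  rw [h]
  exact continuous_finset_sum _ fun j _ => by fun_prop

lemma measurableSet_goodPred :
    MeasurableSet {w : Fin m → Fin d → ℝ | goodPred d m w} := by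
  have h1 : MeasurableSet {w : Fin m → Fin d → ℝ | (gram1 w).det ≠ 0} := by
    have := continuous_gram1_det (m := m) (d := d) |>.measurable
      (measurableSet_singleton (0:ℝ)).compl
    simpa [Set.preimage] using this
  have h2 : MeasurableSet {w : Fin m → Fin d → ℝ | (gram2 w).det ≠ 0} := by
    have := continuous_gram2_det (m := m) (d := d) |>.measurable
      (measurableSet_singleton (0:ℝ)).compl
    simpa [Set.preimage] using this
  have h : {w : Fin m → Fin d → ℝ | goodPred d m w}
      = {w | (gram1 w).det ≠ 0} ∪ {w | (gram2 w).det ≠ 0} := rfl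
  rw [h]
  exact h1.union h2


instance (d : ℕ) : IsProbabilityMeasure (gaussianPi d) := by
  unfold gaussianPi
  infer_instance

lemma absolutelyContinuous_of_map {α β : Type*} [MeasurableSpace α] [MeasurableSpace β]
    (e : α ≃ᵐ β) {μ ν : Measure α} (h : μ.map e ≪ ν.map e) : μ ≪ ν := by
  intro s hs
  have key : ∀ κ : Measure α, κ s = κ.map e (e.symm ⁻¹' s) := by
    intro κ
    rw [MeasurableEquiv.map_apply]
    congr 1
    ext x
    simp
  rw [key μ]
  apply h
  rw [← key ν]
  exact hs

lemma gaussianPi_absolutelyContinuous :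
    ∀ d : ℕ, gaussianPi d ≪ (volume : Measure (Fin d → ℝ)) := by
  intro d
  induction d with
  | zero =>
      intro s hs
      rcases Set.eq_empty_or_nonempty s with rfl | ⟨x0, hx0⟩
      · simp
      · exfalso
        have hsu : s = Set.univ := Set.eq_univ_of_forall fun y => by
          rwa [Subsingleton.elim y x0]
        rw [hsu] at hs
        have huniv : (volume : Measure (Fin 0 → ℝ)) Set.univ = 1 := by
          rw [volume_pi, Measure.pi_univ]
          simp
        rw [huniv] at hs
        exact one_ne_zero hs
  | succ d ih =>
      set e := MeasurableEquiv.piFinSuccAbove (fun _ : Fin (d+1) => ℝ) 0 with he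
      have hmp := measurePreserving_piFinSuccAbove (fun _ : Fin (d+1) => gaussianReal 0 1) 0
      have hmpv := measurePreserving_piFinSuccAbove (fun _ : Fin (d+1) => (volume : Measure ℝ)) 0
      apply absolutelyContinuous_of_map e
      have h1 : (gaussianPi (d+1)).map e = (gaussianReal 0 1).prod (gaussianPi d) := hmp.map_eq
      have h2 : (volume : Measure (Fin (d+1) → ℝ)).map e
          = (volume : Measure ℝ).prod (volume : Measure (Fin d → ℝ)) := by
        simp only [volume_pi]
        exact hmpv.map_eq
      rw [h1, h2]
      exact (gaussianReal_absolutelyContinuous 0 one_ne_zero).prod ih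

lemma gaussianPi_submodule_null {d : ℕ} (p : Submodule ℝ (Fin d → ℝ)) (hp : p ≠ ⊤) :
    gaussianPi d (p : Set (Fin d → ℝ)) = 0 :=
  gaussianPi_absolutelyContinuous d (Measure.addHaar_submodule volume p hp)

lemma ae_goodPred (d : ℕ) :
    ∀ m : ℕ, ∀ᵐ w ∂(Measure.pi fun _ : Fin m => gaussianPi d), goodPred d m w := by
  intro m
  induction m with
  | zero =>
      refine Filter.Eventually.of_forall fun w => Or.inl ?_
      rw [Matrix.det_isEmpty]
      exact one_ne_zero
  | succ m ih =>
      set ν := gaussianPi d with hν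
      set μm := Measure.pi fun _ : Fin m => ν with hμm
      set e := MeasurableEquiv.piFinSuccAbove (fun _ : Fin (m+1) => (Fin d → ℝ)) 0 with he
      have hmp := measurePreserving_piFinSuccAbove (fun _ : Fin (m+1) => ν) 0
      have hmap : (ν.prod μm).map e.symm = Measure.pi fun _ : Fin (m+1) => ν :=
        (MeasurePreserving.symm e hmp).map_eq
      rw [← hmap, ae_map_iff e.symm.measurable.aemeasurable measurableSet_goodPred]
      have hconsEq : ∀ z : (Fin d → ℝ) × (Fin m → Fin d → ℝ),
          e.symm z = Fin.cons z.1 z.2 := by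
        intro z
        simp [he, MeasurableEquiv.piFinSuccAbove, Fin.insertNth_zero', Fin.consEquiv]
      rw [ae_iff]
      set S := {z : (Fin d → ℝ) × (Fin m → Fin d → ℝ) | ¬ goodPred d (m+1) (e.symm z)} with hSdef
      have hSm : MeasurableSet S := by
        have h : S = e.symm ⁻¹' {w | goodPred d (m+1) w}ᶜ := rfl
        rw [h]
        exact e.symm.measurable measurableSet_goodPred.compl
      show (ν.prod μm) S = 0
      have hswap : (ν.prod μm) S = (μm.prod ν) (Prod.swap ⁻¹' S) := by
        rw [← Measure.prod_swap, Measure.map_apply measurable_swap hSm]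
      rw [hswap, Measure.measure_prod_null (measurable_swap hSm)]
      filter_upwards [ih] with w hw
      show ν (Prod.mk w ⁻¹' (Prod.swap ⁻¹' S)) = 0
      have hset : Prod.mk w ⁻¹' (Prod.swap ⁻¹' S)
          = {v | ¬ goodPred d (m+1) (Fin.cons v w)} := by
        ext v
        simp [hSdef, hconsEq]
      rw [hset]
      have hcase2 : (gram2 w).det ≠ 0 →
          ν {v | ¬ goodPred d (m+1) (Fin.cons v w)} = 0 := by
        intro h2
        have hempty : {v : Fin d → ℝ | ¬ goodPred d (m+1) (Fin.cons v w)} = ∅ :=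
          Set.eq_empty_iff_forall_notMem.mpr fun v hv => hv (goodPred_cons_of_gram2 h2)
        rw [hempty]
        exact measure_empty
      rcases hw with h1 | h2
      · by_cases hsp : Submodule.span ℝ (Set.range w) = ⊤
        · exact hcase2 (gram2_det_ne_zero_of_span hsp)
        · have hnull : ν (Submodule.span ℝ (Set.range w) : Set (Fin d → ℝ)) = 0 :=
            gaussianPi_submodule_null _ hsp
          refine measure_mono_null ?_ hnull
          intro v hv
          simp only [Set.mem_setOf_eq] at hv
          by_contra hvp
          exact hv (Or.inl ((linearIndependent_iff_gram1 _).mp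
            (linearIndependent_fin_cons.mpr ⟨(linearIndependent_iff_gram1 w).mpr h1, hvp⟩)))
      · exact hcase2 h2

lemma gram2_posDef_of_goodPred {d m : ℕ} (hdm : d ≤ m)
    {w : Fin m → Fin d → ℝ} (hw : goodPred d m w) : (gram2 w).PosDef := by
  rcases hw with h1 | h2
  · have hind : LinearIndependent ℝ w := (linearIndependent_iff_gram1 w).mpr h1
    have hle : m ≤ d := by
      have := hind.fintype_card_le_finrank
      simpa [Module.finrank_fin_fun] using this
    have hmd : m = d := le_antisymm hle hdm
    haveI : Nonempty (Fin m) ∨ m = 0 := by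
      rcases Nat.eq_zero_or_pos m with h | h
      · exact Or.inr h
      · exact Or.inl ⟨⟨0, h⟩⟩
    have hsp : Submodule.span ℝ (Set.range w) = ⊤ := by
      rcases Nat.eq_zero_or_pos m with h0 | h0
      · -- then d = 0 too, space is trivial
        have hd0 : d = 0 := by omega
        subst hd0
        apply Subsingleton.elim
      · haveI : Nonempty (Fin m) := ⟨⟨0, h0⟩⟩
        exact hind.span_eq_top_of_card_eq_finrank (by simp [hmd, Module.finrank_fin_fun])
    rw [gram2_eq_sum_smul]
    exact posDef_sum_smul_of_span (fun _ => one_pos) hsp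
  · exact posDef_of_posSemidef_det_ne_zero (gram2_posSemidef w) h2

lemma sum_f_eq {n' i : ℕ} (lam : Fin n' → ℝ) (hlam_pos : ∀ k, 0 < lam k)
    (w : Fin n' → Fin i → ℝ)
    (hw : ∀ k, (∑ l ∈ Finset.univ.erase k, lam l • Matrix.vecMulVec (w l) (w l)).PosDef)
    (hn' : 0 < n') :
    ∑ k, (1 + lam k * (w k ⬝ᵥ ((∑ l ∈ Finset.univ.erase k,
        lam l • Matrix.vecMulVec (w l) (w l))⁻¹).mulVec (w k)))⁻¹
      = (n' : ℝ) - (i : ℝ) := by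
  set B := ∑ l, lam l • Matrix.vecMulVec (w l) (w l) with hB
  have hsplit : ∀ k : Fin n',
      (∑ l ∈ Finset.univ.erase k, lam l • Matrix.vecMulVec (w l) (w l))
        + lam k • Matrix.vecMulVec (w k) (w k) = B := fun k =>
    Finset.sum_erase_add Finset.univ _ (Finset.mem_univ k)
  set Bk := fun k : Fin n' =>
    ∑ l ∈ Finset.univ.erase k, lam l • Matrix.vecMulVec (w l) (w l) with hBkdef
  have k0 : Fin n' := ⟨0, hn'⟩
  have hBpd : B.PosDef := by
    refine Matrix.PosDef.of_dotProduct_mulVec_pos (by rw [hB]; exact isHermitian_sum_smul _ _ _) fun x hx => ?_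
    rw [star_trivial, ← hsplit k0, Matrix.add_mulVec, dotProduct_add]
    have h1 := (hw k0).dotProduct_mulVec_pos hx
    rw [star_trivial] at h1
    have h2 : 0 ≤ x ⬝ᵥ (lam k0 • Matrix.vecMulVec (w k0) (w k0)) *ᵥ x := by
      rw [Matrix.smul_mulVec, dotProduct_smul, smul_eq_mul, dot_vecMulVec]
      exact mul_nonneg (hlam_pos k0).le (sq_nonneg _)
    linarith
  have hdB : B.det ≠ 0 := hBpd.det_pos.ne'
  have hdBk : ∀ k, (Bk k).det ≠ 0 := fun k => (hw k).det_pos.ne'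
  have hBinv : B *ᵥ (B⁻¹ *ᵥ w k0) = w k0 := by
    rw [Matrix.mulVec_mulVec, Matrix.mul_nonsing_inv _ (isUnit_iff_ne_zero.mpr hdB),
      Matrix.one_mulVec]
  have hterm : ∀ k, (1 + lam k * (w k ⬝ᵥ ((Bk k)⁻¹).mulVec (w k)))⁻¹
      = 1 - lam k * (w k ⬝ᵥ B⁻¹ *ᵥ w k) := by
    intro k
    set q := w k ⬝ᵥ (Bk k)⁻¹ *ᵥ w k with hq
    set r := w k ⬝ᵥ B⁻¹ *ᵥ w k with hr
    have hBinvk : B *ᵥ (B⁻¹ *ᵥ w k) = w k := by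
      rw [Matrix.mulVec_mulVec, Matrix.mul_nonsing_inv _ (isUnit_iff_ne_zero.mpr hdB),
        Matrix.one_mulVec]
    have hBkinv : ∀ x, (Bk k)⁻¹ *ᵥ ((Bk k) *ᵥ x) = x := by
      intro x
      rw [Matrix.mulVec_mulVec, Matrix.nonsing_inv_mul _ (isUnit_iff_ne_zero.mpr (hdBk k)),
        Matrix.one_mulVec]
    have hq0 : 0 ≤ q := by
      set y := (Bk k)⁻¹ *ᵥ w k with hy
      have hBky : (Bk k) *ᵥ y = w k := by
        rw [hy, Matrix.mulVec_mulVec, Matrix.mul_nonsing_inv _ (isUnit_iff_ne_zero.mpr (hdBk k)),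
          Matrix.one_mulVec]
      have hqy : q = y ⬝ᵥ (Bk k) *ᵥ y := by
        rw [hBky, hq, dotProduct_comm]
      have hps := (hw k).posSemidef.dotProduct_mulVec_nonneg y
      rw [star_trivial] at hps
      linarith [hqy ▸ hps]
    have hkey : (Bk k) *ᵥ (B⁻¹ *ᵥ w k) = (1 - lam k * r) • w k := by
      have h1 : Bk k = B - lam k • Matrix.vecMulVec (w k) (w k) := by
        rw [← hsplit k, add_sub_cancel_right]
      rw [h1, Matrix.sub_mulVec, hBinvk, Matrix.smul_mulVec, vecMulVec_mulVec', ← hr]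
      ext a
      simp only [Pi.sub_apply, Pi.smul_apply, smul_eq_mul]
      ring
    have hu : B⁻¹ *ᵥ w k = (1 - lam k * r) • ((Bk k)⁻¹ *ᵥ w k) := by
      have hcongr := congrArg (fun z => (Bk k)⁻¹ *ᵥ z) hkey
      rw [hBkinv, Matrix.mulVec_smul] at hcongr
      exact hcongr
    have hreq : r = (1 - lam k * r) * q := by
      conv_lhs => rw [hr, hu]
      rw [dotProduct_smul, smul_eq_mul, ← hq]
    have hmul : (1 - lam k * r) * (1 + lam k * q) = 1 := by
      linear_combination (-(lam k)) * hreq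
    exact inv_eq_of_mul_eq_one_left hmul
  rw [Finset.sum_congr rfl fun k _ => hterm k, Finset.sum_sub_distrib]
  have htr : ∑ k, lam k * (w k ⬝ᵥ B⁻¹ *ᵥ w k) = (i : ℝ) := by
    have h1 : ∀ (M : Matrix (Fin i) (Fin i) ℝ) (u : Fin i → ℝ),
        Matrix.trace (M * Matrix.vecMulVec u u) = u ⬝ᵥ M *ᵥ u := by
      intro M u
      simp only [Matrix.trace, Matrix.diag, Matrix.mul_apply, Matrix.vecMulVec_apply,
        dotProduct, Matrix.mulVec, Finset.mul_sum]
      exact Finset.sum_congr rfl fun a _ => Finset.sum_congr rfl fun b _ => by ring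
    have h2 : ∑ k, lam k * (w k ⬝ᵥ B⁻¹ *ᵥ w k) = Matrix.trace (B⁻¹ * B) := by
      conv_rhs => rw [hB]
      rw [Matrix.mul_sum, Matrix.trace_sum]
      refine Finset.sum_congr rfl fun k _ => ?_
      rw [Matrix.mul_smul, Matrix.trace_smul, h1, smul_eq_mul]
    rw [h2, Matrix.nonsing_inv_mul _ (isUnit_iff_ne_zero.mpr hdB), Matrix.trace_one]
    simp
  rw [htr]
  simp [Finset.card_univ]

end TvalSum

/-- For any full-rank `n × n` matrix `A` and any `1 ≤ i ≤ n−1`, the quantities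
`t_{i,k}(A)` (built from the ordered eigenvalues of `AAᵀ`) satisfy
`t_{i,1}(A) + ⋯ + t_{i,n}(A) = n − i`. -/
theorem tval_sum {n : ℕ} (A : Matrix (Fin n) (Fin n) ℝ) (hfull : IsUnit A.det)
    (lam : Fin n → ℝ) (hlam : IsOrderedEigenvalues (A * Aᵀ) lam)
    (i : ℕ) (hi1 : 1 ≤ i) (hi2 : i ≤ n - 1) :
    ∑ k, tval i lam k = (n : ℝ) - (i : ℝ) := by
  classical
  have hlam_pos : ∀ k, 0 < lam k := by
    obtain ⟨-, hM, σ, hlam_eq⟩ := hlam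
    intro k
    have hpsd : (A * Aᵀ).PosSemidef := by
      have hAt : Aᵀ = Aᴴ := by
        ext a b
        simp [Matrix.conjTranspose_apply]
      rw [hAt]
      exact Matrix.posSemidef_self_mul_conjTranspose A
    have hnn : 0 ≤ hM.eigenvalues (σ k) := hpsd.eigenvalues_nonneg (σ k)
    have hdet : (A * Aᵀ).det ≠ 0 := by
      rw [Matrix.det_mul, Matrix.det_transpose]
      exact mul_ne_zero hfull.ne_zero hfull.ne_zero
    have hne : hM.eigenvalues (σ k) ≠ 0 := by
      intro h0
      apply hdet
      rw [hM.det_eq_prod_eigenvalues]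
      refine Finset.prod_eq_zero (Finset.mem_univ (σ k)) ?_
      rw [h0]
      norm_num
    rw [hlam_eq]
    exact lt_of_le_of_ne hnn (Ne.symm hne)
  obtain ⟨m, rfl⟩ : ∃ m, n = m + 1 := ⟨n - 1, by omega⟩
  have himm : i ≤ m := by omega
  set μ := (Measure.pi fun _ : Fin (m+1) => gaussianPi i) with hμ
  haveI : IsProbabilityMeasure μ := by rw [hμ]; infer_instance
  set f : Fin (m+1) → (Fin (m+1) → Fin i → ℝ) → ℝ := fun k w =>
    (1 + lam k * (w k ⬝ᵥ ((∑ l ∈ Finset.univ.erase k,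
        lam l • Matrix.vecMulVec (w l) (w l))⁻¹).mulVec (w k)))⁻¹ with hf
  have htval : ∀ k, tval i lam k = ∫ w, f k w ∂μ := fun k => rfl
  have hgood : ∀ᵐ w ∂μ, ∀ k : Fin (m+1),
      (∑ l ∈ Finset.univ.erase k, lam l • Matrix.vecMulVec (w l) (w l)).PosDef := by
    rw [ae_all_iff]
    intro k
    have hmp := measurePreserving_piFinSuccAbove (fun _ : Fin (m+1) => gaussianPi i) k
    have hprod : ∀ᵐ z ∂((gaussianPi i).prod (Measure.pi fun _ : Fin m => gaussianPi i)),
        TvalSum.goodPred i m z.2 := by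
      rw [ae_iff]
      have hbad : {z : (Fin i → ℝ) × (Fin m → Fin i → ℝ) | ¬ TvalSum.goodPred i m z.2}
          = Set.univ ×ˢ {w : Fin m → Fin i → ℝ | TvalSum.goodPred i m w}ᶜ := by
        ext z
        simp [Set.mem_prod]
      rw [hbad, Measure.prod_prod]
      have h0 : (Measure.pi fun _ : Fin m => gaussianPi i)
          {w : Fin m → Fin i → ℝ | TvalSum.goodPred i m w}ᶜ = 0 := by
        have h := TvalSum.ae_goodPred i m
        rw [ae_iff] at h
        exact h
      rw [h0, mul_zero]
    rw [← hmp.map_eq] at hprod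
    have hmeas : MeasurableSet {z : (Fin i → ℝ) × (Fin m → Fin i → ℝ) |
        TvalSum.goodPred i m z.2} :=
      measurable_snd TvalSum.measurableSet_goodPred
    have h2 := (ae_map_iff hmp.measurable.aemeasurable hmeas).mp hprod
    filter_upwards [h2] with w hw2
    have hpd : (TvalSum.gram2 fun j => w (k.succAbove j)).PosDef :=
      TvalSum.gram2_posDef_of_goodPred himm hw2
    refine Matrix.PosDef.of_dotProduct_mulVec_pos (TvalSum.isHermitian_sum_smul _ _ _) fun x hx => ?_
    rw [star_trivial, TvalSum.dot_sum_smul_vecMulVec]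
    have hq := hpd.dotProduct_mulVec_pos hx
    rw [star_trivial, TvalSum.dot_gram2] at hq
    have hex : ∃ j, (w (k.succAbove j)) ⬝ᵥ x ≠ 0 := by
      by_contra hcon
      push_neg at hcon
      rw [Finset.sum_eq_zero fun j _ => by rw [hcon j]; ring] at hq
      exact lt_irrefl 0 hq
    obtain ⟨j, hj⟩ := hex
    refine Finset.sum_pos' (fun l _ => mul_nonneg (hlam_pos l).le (sq_nonneg _))
      ⟨k.succAbove j, Finset.mem_erase.mpr ⟨Fin.succAbove_ne k j, Finset.mem_univ _⟩,
        mul_pos (hlam_pos _) (by positivity)⟩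
  have hfm : ∀ k, Measurable (f k) := by
    intro k
    have hBkc : Continuous fun w : Fin (m+1) → Fin i → ℝ =>
        (∑ l ∈ Finset.univ.erase k, lam l • Matrix.vecMulVec (w l) (w l)) := by
      apply continuous_pi; intro a
      apply continuous_pi; intro b
      have h : (fun w : Fin (m+1) → Fin i → ℝ =>
          (∑ l ∈ Finset.univ.erase k, lam l • Matrix.vecMulVec (w l) (w l)) a b)
          = fun w => ∑ l ∈ Finset.univ.erase k, lam l * (w l a * w l b) := by
        funext w
        simp [Matrix.sum_apply, Matrix.vecMulVec_apply]
      show Continuous fun w : Fin (m+1) → Fin i → ℝ =>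
        (∑ l ∈ Finset.univ.erase k, lam l • Matrix.vecMulVec (w l) (w l)) a b
      rw [h]
      exact continuous_finset_sum _ fun l _ => by fun_prop
    have hinv_entry : ∀ a b : Fin i, Measurable fun w : Fin (m+1) → Fin i → ℝ =>
        ((∑ l ∈ Finset.univ.erase k, lam l • Matrix.vecMulVec (w l) (w l))⁻¹) a b := by
      intro a b
      have hrw : (fun w : Fin (m+1) → Fin i → ℝ =>
          ((∑ l ∈ Finset.univ.erase k, lam l • Matrix.vecMulVec (w l) (w l))⁻¹) a b)
          = fun w => ((∑ l ∈ Finset.univ.erase k, lam l • Matrix.vecMulVec (w l) (w l)).det)⁻¹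
              * (∑ l ∈ Finset.univ.erase k,
                  lam l • Matrix.vecMulVec (w l) (w l)).adjugate a b := by
        funext w
        rw [Matrix.inv_def]
        simp [Ring.inverse_eq_inv']
      rw [hrw]
      exact ((hBkc.matrix_det).measurable.inv).mul
        (((continuous_apply b).comp
          ((continuous_apply a).comp hBkc.matrix_adjugate)).measurable)
    have hqm : Measurable fun w : Fin (m+1) → Fin i → ℝ =>
        w k ⬝ᵥ ((∑ l ∈ Finset.univ.erase k,
          lam l • Matrix.vecMulVec (w l) (w l))⁻¹).mulVec (w k) := by
      have h : (fun w : Fin (m+1) → Fin i → ℝ =>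
          w k ⬝ᵥ ((∑ l ∈ Finset.univ.erase k,
            lam l • Matrix.vecMulVec (w l) (w l))⁻¹).mulVec (w k))
          = fun w => ∑ a, w k a * ∑ b, ((∑ l ∈ Finset.univ.erase k,
              lam l • Matrix.vecMulVec (w l) (w l))⁻¹) a b * w k b := by
        funext w
        simp [dotProduct, Matrix.mulVec]
      rw [h]
      refine Finset.measurable_sum _ fun a _ => Measurable.mul ?_ ?_
      · exact (measurable_pi_apply a).comp (measurable_pi_apply k)
      · exact Finset.measurable_sum _ fun b _ =>
          (hinv_entry a b).mul ((measurable_pi_apply b).comp (measurable_pi_apply k))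
    exact (measurable_const.add (measurable_const.mul hqm)).inv
  have hint : ∀ k, Integrable (f k) μ := by
    intro k
    refine Integrable.mono' (integrable_const (1:ℝ)) (hfm k).aestronglyMeasurable ?_
    filter_upwards [hgood] with w hwg
    have hpd := hwg k
    have hdBk : (∑ l ∈ Finset.univ.erase k, lam l • Matrix.vecMulVec (w l) (w l)).det ≠ 0 :=
      hpd.det_pos.ne'
    set Bk := ∑ l ∈ Finset.univ.erase k, lam l • Matrix.vecMulVec (w l) (w l) with hBk
    have hq0 : 0 ≤ w k ⬝ᵥ Bk⁻¹ *ᵥ w k := by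
      have hBky : Bk *ᵥ (Bk⁻¹ *ᵥ w k) = w k := by
        rw [Matrix.mulVec_mulVec, Matrix.mul_nonsing_inv _ (isUnit_iff_ne_zero.mpr hdBk),
          Matrix.one_mulVec]
      have hps := hpd.posSemidef.dotProduct_mulVec_nonneg (Bk⁻¹ *ᵥ w k)
      rw [star_trivial] at hps
      calc (0:ℝ) ≤ (Bk⁻¹ *ᵥ w k) ⬝ᵥ Bk *ᵥ (Bk⁻¹ *ᵥ w k) := hps
        _ = w k ⬝ᵥ Bk⁻¹ *ᵥ w k := by rw [hBky, dotProduct_comm]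
    have h1q : (1:ℝ) ≤ 1 + lam k * (w k ⬝ᵥ Bk⁻¹ *ᵥ w k) := by
      nlinarith [mul_nonneg (hlam_pos k).le hq0]
    have hfk : f k w = (1 + lam k * (w k ⬝ᵥ Bk⁻¹ *ᵥ w k))⁻¹ := rfl
    rw [hfk, Real.norm_eq_abs, abs_of_nonneg (by positivity)]
    exact inv_le_one_of_one_le₀ h1q
  have hconst : (fun w => ∑ k, f k w) =ᵐ[μ] fun _ => ((m+1 : ℕ) : ℝ) - (i : ℝ) := by
    filter_upwards [hgood] with w hwg
    exact TvalSum.sum_f_eq lam hlam_pos w hwg (Nat.succ_pos m)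
  calc ∑ k, tval i lam k = ∑ k, ∫ w, f k w ∂μ := Finset.sum_congr rfl fun k _ => htval k
    _ = ∫ w, ∑ k, f k w ∂μ := (integral_finset_sum Finset.univ fun k _ => hint k).symm
    _ = ∫ _w, (((m+1:ℕ):ℝ) - (i:ℝ)) ∂μ := integral_congr_ae hconst
    _ = ((m+1:ℕ):ℝ) - (i:ℝ) := by simp [integral_const, measure_univ]
end

section
/- If A = I_n is the n×n identity matrix, then for all 1 ≤ i ≤ n−1 and 1 ≤ k ≤ n one has t_{i,k}(I_n) = (n − i)/n. -/
open MeasureTheory ProbabilityTheory Matrix Filter Topology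

section AuxProof

open MeasureTheory ProbabilityTheory Matrix MvPolynomial

instance gaussianPi.instIsProbabilityMeasure (d : ℕ) : IsProbabilityMeasure (gaussianPi d) := by
  unfold gaussianPi; infer_instance

/-- Measurability of multivariate polynomial evaluation along measurable coordinates. -/
lemma measurable_mv_eval {σ : Type*} {α : Type*} [MeasurableSpace α]
    (p : MvPolynomial σ ℝ) {f : α → σ → ℝ} (hf : ∀ s, Measurable fun x => f x s) :
    Measurable fun x => MvPolynomial.eval (f x) p := by
  have : (fun x => MvPolynomial.eval (f x) p)
      = fun x => ∑ d ∈ p.support, p.coeff d * ∏ s ∈ d.support, f x s ^ d s := by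
    funext x; rw [MvPolynomial.eval_eq]
  rw [this]
  exact Finset.measurable_sum _ fun d _ =>
    (measurable_const.mul (Finset.measurable_prod _ fun s _ => (hf s).pow_const _))

lemma gaussianReal_finite_null {s : Set ℝ} (hs : s.Finite) : gaussianReal 0 1 s = 0 :=
  gaussianReal_absolutelyContinuous 0 one_ne_zero (hs.measure_zero volume)

/-- Zero locus of a nonzero polynomial is null for the standard Gaussian product measure. -/
lemma gaussianPi_null_poly :
    ∀ (m : ℕ) (p : MvPolynomial (Fin m) ℝ), p ≠ 0 →
      (Measure.pi fun _ : Fin m => gaussianReal 0 1) {x | MvPolynomial.eval x p = 0} = 0 := by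
  intro m
  induction m with
  | zero =>
    intro p hp
    obtain ⟨c, rfl⟩ := MvPolynomial.C_surjective (Fin 0) p
    have hc : c ≠ 0 := fun h => hp (by rw [h, map_zero])
    have hset : {x : Fin 0 → ℝ | MvPolynomial.eval x (MvPolynomial.C c) = 0} = ∅ := by
      ext x; simp [hc]
    rw [hset, measure_empty]
  | succ m ih =>
    intro p hp
    set q : Polynomial (MvPolynomial (Fin m) ℝ) := MvPolynomial.finSuccEquiv ℝ m p with hqdef
    have hq0 : q ≠ 0 := by
      simp only [hqdef, ne_eq, EmbeddingLike.map_eq_zero_iff]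
      exact hp
    have key : ∀ (a : ℝ) (y : Fin m → ℝ),
        MvPolynomial.eval (Fin.cons a y) p
          = MvPolynomial.eval y (Polynomial.eval (MvPolynomial.C a) q) := by
      intro a y
      have h2 : MvPolynomial.eval y (Polynomial.eval (MvPolynomial.C a) q)
          = Polynomial.eval₂ (MvPolynomial.eval y) a q := by
        show (MvPolynomial.eval y : MvPolynomial (Fin m) ℝ →+* ℝ)
            (Polynomial.eval₂ (RingHom.id _) (MvPolynomial.C a) q) = _
        rw [Polynomial.hom_eval₂]
        simp
      rw [MvPolynomial.eval_eq_eval_mv_eval', Polynomial.eval_map, h2]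
    have hroots : {a : ℝ | Polynomial.eval (MvPolynomial.C a) q = 0}.Finite := by
      have : {a : ℝ | Polynomial.eval (MvPolynomial.C a) q = 0}
          ⊆ (MvPolynomial.C : ℝ →+* MvPolynomial (Fin m) ℝ) ⁻¹' {z | q.IsRoot z} := fun a ha => ha
      exact ((Polynomial.finite_setOf_isRoot hq0).preimage
        (MvPolynomial.C_injective (Fin m) ℝ).injOn).subset this
    -- move to the product
    set ν := Measure.pi fun _ : Fin m => gaussianReal 0 1 with hν
    have hmp := measurePreserving_piFinSuccAbove (fun _ : Fin (m + 1) => gaussianReal 0 1) 0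
    set e := MeasurableEquiv.piFinSuccAbove (fun _ : Fin (m + 1) => ℝ) 0 with he
    set T : Set (ℝ × (Fin m → ℝ)) := {z | MvPolynomial.eval (Fin.cons z.1 z.2) p = 0} with hT
    have hTmeas : MeasurableSet T := by
      have : Measurable fun z : ℝ × (Fin m → ℝ) => MvPolynomial.eval (Fin.cons z.1 z.2) p := by
        refine measurable_mv_eval p fun s => ?_
        refine Fin.cases ?_ (fun j => ?_) s
        · simpa using measurable_fst
        · have : Measurable fun z : ℝ × (Fin m → ℝ) => z.2 j := (measurable_pi_apply j).comp measurable_snd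
          simpa using this
      exact this (measurableSet_singleton 0)
    have hpre : {x : Fin (m + 1) → ℝ | MvPolynomial.eval x p = 0} = e ⁻¹' T := by
      ext x
      have hex : e x = (x 0, Fin.removeNth 0 x) := rfl
      simp only [Set.mem_setOf_eq, Set.mem_preimage, hex, hT, Fin.removeNth_zero]
      rw [Fin.cons_self_tail]
    rw [hpre, hmp.measure_preimage hTmeas.nullMeasurableSet]
    rw [MeasureTheory.Measure.measure_prod_null hTmeas]
    have hae : ∀ᵐ a ∂(gaussianReal 0 1), Polynomial.eval (MvPolynomial.C a) q ≠ 0 := by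
      have := gaussianReal_finite_null hroots
      exact (ae_iff (p := fun a => Polynomial.eval (MvPolynomial.C a) q ≠ 0)).mpr (by simpa using this)
    filter_upwards [hae] with a ha
    have : Prod.mk a ⁻¹' T = {y | MvPolynomial.eval y (Polynomial.eval (MvPolynomial.C a) q) = 0} := by
      ext y; simp [hT, key]
    show ν (Prod.mk a ⁻¹' T) = 0
    rw [this]
    exact ih _ ha


def splitIdx (n i : ℕ) : (Fin (n+1) × Fin i) ≃ ((Fin n × Fin i) ⊕ Fin i) where
  toFun q := Fin.cases (Sum.inr q.2) (fun l => Sum.inl (l, q.2)) q.1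
  invFun s := Sum.elim (fun z => (z.1.succ, z.2)) (fun j => ((0 : Fin (n+1)), j)) s
  left_inv := by rintro ⟨l, j⟩; induction l using Fin.cases <;> simp
  right_inv := by rintro (⟨l, j⟩ | j) <;> simp

lemma gaussianPi_null_poly2 (i : ℕ) :
    ∀ (n : ℕ) (p : MvPolynomial (Fin n × Fin i) ℝ), p ≠ 0 →
      (Measure.pi fun _ : Fin n => gaussianPi i)
        {w | MvPolynomial.eval (fun q => w q.1 q.2) p = 0} = 0 := by
  intro n
  induction n with
  | zero =>
    intro p hp
    obtain ⟨c, rfl⟩ := MvPolynomial.C_surjective (Fin 0 × Fin i) p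
    have hc : c ≠ 0 := fun h => hp (by rw [h, map_zero])
    have hset : {w : Fin 0 → Fin i → ℝ |
        MvPolynomial.eval (fun q : Fin 0 × Fin i => w q.1 q.2) (MvPolynomial.C c) = 0} = ∅ := by
      ext w; simp [hc]
    rw [hset, measure_empty]
  | succ n ih =>
    intro p hp
    set q := (MvPolynomial.sumAlgEquiv ℝ (Fin n × Fin i) (Fin i))
        (MvPolynomial.rename (splitIdx n i) p) with hqdef
    have hq0 : q ≠ 0 := by
      intro h
      apply hp
      have h1 : MvPolynomial.rename (splitIdx n i) p = 0 :=
        (EmbeddingLike.map_eq_zero_iff).mp h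
      have h2 : MvPolynomial.rename (splitIdx n i) p = MvPolynomial.rename (splitIdx n i) 0 := by
        simpa using h1
      exact (MvPolynomial.rename_injective _ (splitIdx n i).injective) h2
    have key : ∀ (a : Fin i → ℝ) (v : Fin n → Fin i → ℝ),
        MvPolynomial.eval (fun z : Fin (n+1) × Fin i => (Fin.cons a v : Fin (n+1) → Fin i → ℝ) z.1 z.2) p
          = MvPolynomial.eval (fun z : Fin n × Fin i => v z.1 z.2)
              (MvPolynomial.map (MvPolynomial.eval a : MvPolynomial (Fin i) ℝ →+* ℝ) q) := by
      intro a v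
      rw [hqdef]
      have hgen : ∀ pp : MvPolynomial (Fin (n+1) × Fin i) ℝ,
          MvPolynomial.eval (fun z : Fin n × Fin i => v z.1 z.2)
            (MvPolynomial.map (MvPolynomial.eval a : MvPolynomial (Fin i) ℝ →+* ℝ)
              ((MvPolynomial.sumAlgEquiv ℝ (Fin n × Fin i) (Fin i))
                (MvPolynomial.rename (splitIdx n i) pp)))
          = MvPolynomial.eval (fun z : Fin (n+1) × Fin i => (Fin.cons a v : Fin (n+1) → Fin i → ℝ) z.1 z.2) pp := by
        intro pp
        induction pp using MvPolynomial.induction_on with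
        | C r => simp
        | add f g hf hg => simp only [map_add, hf, hg]
        | mul_X f s hf =>
          obtain ⟨l, j⟩ := s
          rw [_root_.map_mul, _root_.map_mul, _root_.map_mul, _root_.map_mul, hf]
          congr 1
          induction l using Fin.cases with
          | zero => simp [splitIdx]
          | succ l => simp [splitIdx]
      exact (hgen p).symm
    obtain ⟨d, hd⟩ := MvPolynomial.ne_zero_iff.mp hq0
    have hNa : (gaussianPi i) {a | MvPolynomial.eval a (MvPolynomial.coeff d q) = 0} = 0 :=
      gaussianPi_null_poly i _ hd
    have hmp := measurePreserving_piFinSuccAbove (fun _ : Fin (n + 1) => gaussianPi i) 0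
    set e := MeasurableEquiv.piFinSuccAbove (fun _ : Fin (n + 1) => (Fin i → ℝ)) 0 with he
    set T : Set ((Fin i → ℝ) × (Fin n → Fin i → ℝ)) :=
      {z | MvPolynomial.eval (fun q' : Fin (n+1) × Fin i => (Fin.cons z.1 z.2 : Fin (n+1) → Fin i → ℝ) q'.1 q'.2) p = 0}
      with hT
    have hTmeas : MeasurableSet T := by
      have hm : Measurable fun z : (Fin i → ℝ) × (Fin n → Fin i → ℝ) =>
          MvPolynomial.eval (fun q' : Fin (n+1) × Fin i => (Fin.cons z.1 z.2 : Fin (n+1) → Fin i → ℝ) q'.1 q'.2) p := by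
        refine measurable_mv_eval p fun s => ?_
        obtain ⟨l, j⟩ := s
        induction l using Fin.cases with
        | zero =>
          have : Measurable fun z : (Fin i → ℝ) × (Fin n → Fin i → ℝ) => z.1 j :=
            (measurable_pi_apply j).comp measurable_fst
          simpa using this
        | succ l =>
          have : Measurable fun z : (Fin i → ℝ) × (Fin n → Fin i → ℝ) => z.2 l j :=
            (measurable_pi_apply j).comp ((measurable_pi_apply l).comp measurable_snd)
          simpa using this
      exact hm (measurableSet_singleton 0)
    have hpre : {w : Fin (n+1) → Fin i → ℝ |
        MvPolynomial.eval (fun q' => w q'.1 q'.2) p = 0} = e ⁻¹' T := by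
      ext w
      have hex : e w = (w 0, Fin.removeNth 0 w) := rfl
      simp only [Set.mem_setOf_eq, Set.mem_preimage, hex, hT, Fin.removeNth_zero]
      rw [Fin.cons_self_tail]
    rw [hpre, hmp.measure_preimage hTmeas.nullMeasurableSet,
      MeasureTheory.Measure.measure_prod_null hTmeas]
    have hae : ∀ᵐ a ∂(gaussianPi i), MvPolynomial.eval a (MvPolynomial.coeff d q) ≠ 0 := by
      rw [ae_iff]
      simpa using hNa
    filter_upwards [hae] with a ha
    have hra : MvPolynomial.map (MvPolynomial.eval a : MvPolynomial (Fin i) ℝ →+* ℝ) q ≠ 0 := by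
      intro h
      apply ha
      have h2 := congrArg (MvPolynomial.coeff d) h
      rwa [MvPolynomial.coeff_map, MvPolynomial.coeff_zero] at h2
    have hsl : Prod.mk a ⁻¹' T = {v : Fin n → Fin i → ℝ |
        MvPolynomial.eval (fun z : Fin n × Fin i => v z.1 z.2)
          (MvPolynomial.map (MvPolynomial.eval a : MvPolynomial (Fin i) ℝ →+* ℝ) q) = 0} := by
      ext v
      simp only [Set.mem_preimage, hT, Set.mem_setOf_eq]
      rw [← key]
    show (Measure.pi fun _ : Fin n => gaussianPi i) (Prod.mk a ⁻¹' T) = 0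
    rw [hsl]
    exact ih _ hra


section MatrixAux
variable {i : ℕ}

lemma vecMulVec_posSemidef (v : Fin i → ℝ) : (vecMulVec v v).PosSemidef := by
  rw [vecMulVec_eq Unit]
  have h := posSemidef_conjTranspose_mul_self (Matrix.replicateRow Unit v)
  have hc : (Matrix.replicateRow Unit v)ᴴ = Matrix.replicateCol Unit v := by
    rw [conjTranspose_replicateRow]; simp
  rwa [hc] at h

lemma sum_vecMulVec_posSemidef {n : ℕ} (w : Fin n → Fin i → ℝ) (s : Finset (Fin n)) :
    (∑ l ∈ s, vecMulVec (w l) (w l)).PosSemidef := by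
  classical
  refine Finset.sum_induction _ _ (fun a b ha hb => ha.add hb) Matrix.PosSemidef.zero ?_
  intro l _
  exact vecMulVec_posSemidef (w l)

lemma posDef_of_posSemidef_det_ne_zero {M : Matrix (Fin i) (Fin i) ℝ} (hM : M.PosSemidef)
    (hdet : M.det ≠ 0) : M.PosDef := by
  refine PosDef.of_dotProduct_mulVec_pos hM.1 fun x hx => ?_
  rcases lt_or_eq_of_le (hM.dotProduct_mulVec_nonneg x) with h | h
  · exact h
  · exfalso
    have h0 : M.mulVec x = 0 := (hM.dotProduct_mulVec_zero_iff x).mp h.symm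
    have hxz : x = 0 := by
      have hinv : IsUnit M.det := isUnit_iff_ne_zero.mpr hdet
      have h2 := congrArg (fun y => M⁻¹.mulVec y) h0
      simpa [Matrix.mulVec_mulVec, Matrix.nonsing_inv_mul M hinv] using h2
    exact hx hxz

lemma dotProduct_mulVec_eq_trace (M : Matrix (Fin i) (Fin i) ℝ) (v : Fin i → ℝ) :
    v ⬝ᵥ M.mulVec v = (M * vecMulVec v v).trace := by
  simp only [Matrix.trace, Matrix.diag_apply, Matrix.mul_apply, vecMulVec_apply,
    dotProduct, Matrix.mulVec]
  refine Finset.sum_congr rfl fun a _ => ?_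
  rw [Finset.mul_sum]
  exact Finset.sum_congr rfl fun b _ => by ring

lemma mul_vecMulVec (M : Matrix (Fin i) (Fin i) ℝ) (v w : Fin i → ℝ) :
    M * vecMulVec v w = vecMulVec (M.mulVec v) w := by
  ext a b
  simp only [Matrix.mul_apply, vecMulVec_apply, Matrix.mulVec, dotProduct, Finset.sum_mul]
  exact Finset.sum_congr rfl fun c _ => by ring

lemma vecMulVec_mul_vecMulVec (v w x y : Fin i → ℝ) :
    vecMulVec v w * vecMulVec x y = (w ⬝ᵥ x) • vecMulVec v y := by
  ext a b
  simp only [Matrix.mul_apply, vecMulVec_apply, Matrix.smul_apply, dotProduct,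
    smul_eq_mul, Finset.sum_mul, Finset.mul_sum]
  exact Finset.sum_congr rfl fun c _ => by ring

lemma vecMulVec_mulVec (v w x : Fin i → ℝ) :
    (vecMulVec v w).mulVec x = (w ⬝ᵥ x) • v := by
  funext a
  simp only [Matrix.mulVec, vecMulVec_apply, dotProduct, Pi.smul_apply, smul_eq_mul,
    Finset.sum_mul, Finset.mul_sum]
  exact Finset.sum_congr rfl fun c _ => by ring

lemma posDef_add_vecMulVec {S : Matrix (Fin i) (Fin i) ℝ} (hS : S.PosDef) (v : Fin i → ℝ) :
    (S + vecMulVec v v).PosDef :=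
  hS.add_posSemidef (vecMulVec_posSemidef v)

lemma dot_inv_nonneg {S : Matrix (Fin i) (Fin i) ℝ} (hS : S.PosDef) (v : Fin i → ℝ) :
    0 ≤ v ⬝ᵥ S⁻¹.mulVec v := by
  have h := hS.inv.posSemidef.dotProduct_mulVec_nonneg v
  simpa using h

lemma sherman_inv {S : Matrix (Fin i) (Fin i) ℝ} (hS : S.PosDef) (v : Fin i → ℝ) :
    (S + vecMulVec v v)⁻¹
      = S⁻¹ - ((1 + v ⬝ᵥ S⁻¹.mulVec v)⁻¹) • (S⁻¹ * vecMulVec v v * S⁻¹) := by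
  set q := v ⬝ᵥ S⁻¹.mulVec v with hq
  have hq0 : 0 ≤ q := dot_inv_nonneg hS v
  have hq1 : (1 : ℝ) + q ≠ 0 := by positivity
  set c := (1 + q)⁻¹ with hc
  apply Matrix.inv_eq_right_inv
  have hSS : S * S⁻¹ = 1 := Matrix.mul_nonsing_inv S (isUnit_iff_ne_zero.mpr hS.det_pos.ne')
  set Y := vecMulVec v v * S⁻¹ with hY
  have hSinvV : S⁻¹ * vecMulVec v v = vecMulVec (S⁻¹.mulVec v) v := _root_.mul_vecMulVec _ _ _
  have hSX : S * (S⁻¹ * vecMulVec v v * S⁻¹) = Y := by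
    rw [← Matrix.mul_assoc, ← Matrix.mul_assoc, hSS, Matrix.one_mul]
  have hcore : vecMulVec v v * (S⁻¹ * vecMulVec v v) = q • vecMulVec v v := by
    rw [hSinvV, _root_.vecMulVec_mul_vecMulVec, hq]
  have hvX : vecMulVec v v * (S⁻¹ * vecMulVec v v * S⁻¹) = q • Y := by
    rw [← Matrix.mul_assoc, hcore, Matrix.smul_mul, hY]
  rw [Matrix.mul_sub, Matrix.add_mul, Matrix.add_mul, Matrix.mul_smul, Matrix.mul_smul,
    hSS, hSX, hvX]
  have hsc : (1 : ℝ) - c - c * q = 0 := by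
    rw [hc]; field_simp; ring
  have : (1 : Matrix (Fin i) (Fin i) ℝ) + Y - (c • Y + c • q • Y)
      = 1 + ((1 - c - c * q) • Y) := by
    rw [sub_smul, sub_smul, one_smul, smul_smul]
    abel
  rw [this, hsc, zero_smul, add_zero]

lemma sherman_scalar {S : Matrix (Fin i) (Fin i) ℝ} (hS : S.PosDef) (v : Fin i → ℝ) :
    (1 + v ⬝ᵥ S⁻¹.mulVec v)⁻¹ = 1 - v ⬝ᵥ ((S + vecMulVec v v)⁻¹).mulVec v := by
  set q := v ⬝ᵥ S⁻¹.mulVec v with hq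
  have hq0 : 0 ≤ q := dot_inv_nonneg hS v
  have hq1 : (1 : ℝ) + q ≠ 0 := by positivity
  rw [sherman_inv hS v]
  have hXv : (S⁻¹ * vecMulVec v v * S⁻¹).mulVec v = q • S⁻¹.mulVec v := by
    rw [Matrix.mul_assoc, ← Matrix.mulVec_mulVec, ← Matrix.mulVec_mulVec, vecMulVec_mulVec,
      ← hq]
    rw [Matrix.mulVec_smul]
  rw [Matrix.sub_mulVec, Matrix.smul_mulVec, hXv, dotProduct_sub, dotProduct_smul,
    dotProduct_smul, ← hq]
  simp only [smul_eq_mul]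
  field_simp
  ring


variable {α : Type*} [MeasurableSpace α]

lemma measurable_det {M : α → Matrix (Fin i) (Fin i) ℝ}
    (hM : ∀ a b, Measurable fun x => M x a b) : Measurable fun x => (M x).det := by
  simp_rw [Matrix.det_apply]
  refine Finset.measurable_sum _ fun σ _ => ?_
  exact (Finset.measurable_prod _ fun c _ => hM _ _).const_smul _

lemma measurable_inv_entry {M : α → Matrix (Fin i) (Fin i) ℝ}
    (hM : ∀ a b, Measurable fun x => M x a b) (a b : Fin i) :
    Measurable fun x => (M x)⁻¹ a b := by
  have hadj : Measurable fun x => (M x).adjugate a b := by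
    simp_rw [Matrix.adjugate_apply]
    refine measurable_det fun a' b' => ?_
    simp_rw [Matrix.updateRow_apply]
    by_cases h : a' = b
    · simp only [h, if_true]
      exact measurable_const
    · simp only [h, if_false]
      exact hM _ _
  have heq : (fun x => (M x)⁻¹ a b)
      = fun x => ((M x).det)⁻¹ * (M x).adjugate a b := by
    funext x
    rw [Matrix.inv_def, Ring.inverse_eq_inv']
    simp [smul_eq_mul]
  rw [heq]
  exact ((measurable_det hM).inv).mul hadj

lemma measurable_dot_inv {n : ℕ} {W : (Fin n → Fin i → ℝ) → Matrix (Fin i) (Fin i) ℝ}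
    (hW : ∀ a b, Measurable fun x => W x a b) (k : Fin n) :
    Measurable fun w : Fin n → Fin i → ℝ => w k ⬝ᵥ ((W w)⁻¹).mulVec (w k) := by
  have hwk : ∀ j : Fin i, Measurable fun w : Fin n → Fin i → ℝ => w k j := fun j =>
    (measurable_pi_apply j).comp (measurable_pi_apply k)
  simp_rw [dotProduct, Matrix.mulVec, dotProduct]
  refine Finset.measurable_sum _ fun a _ => ?_
  refine (hwk a).mul ?_
  refine Finset.measurable_sum _ fun b _ => ?_
  exact (measurable_inv_entry hW a b).mul (hwk b)

end MatrixAux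

lemma sum_single_outer (i : ℕ) :
    (∑ j : Fin i, vecMulVec (Pi.single j (1:ℝ)) (Pi.single j (1:ℝ)))
      = (1 : Matrix (Fin i) (Fin i) ℝ) := by
  ext a b
  simp only [Matrix.sum_apply, vecMulVec_apply, Pi.single_apply, Matrix.one_apply]
  by_cases h : a = b
  · subst h
    simp
  · rw [if_neg h]
    refine Finset.sum_eq_zero fun j _ => ?_
    rcases eq_or_ne a j with ha | ha
    · subst ha
      rw [if_neg (fun hb : b = a => h hb.symm)]
      ring
    · rw [if_neg ha]
      ring

/-- Almost surely, `∑_{l ≠ k} w_l w_lᵀ` is positive definite (when `i ≤ n - 1`). -/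
lemma ae_posDef_erase {n i : ℕ} (hi2 : i ≤ n - 1) (k : Fin n) :
    ∀ᵐ w : Fin n → Fin i → ℝ ∂(Measure.pi fun _ : Fin n => gaussianPi i),
      (∑ l ∈ Finset.univ.erase k, vecMulVec (w l) (w l)).PosDef := by
  classical
  -- the determinant polynomial
  set P : MvPolynomial (Fin n × Fin i) ℝ :=
    (Matrix.of fun a b : Fin i =>
      ∑ l ∈ Finset.univ.erase k, (X (l, a) * X (l, b) : MvPolynomial (Fin n × Fin i) ℝ)).det
    with hP
  have hevalP : ∀ w : Fin n → Fin i → ℝ,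
      MvPolynomial.eval (fun z : Fin n × Fin i => w z.1 z.2) P
        = (∑ l ∈ Finset.univ.erase k, vecMulVec (w l) (w l)).det := by
    intro w
    rw [hP, RingHom.map_det]
    congr 1
    ext a b
    simp [Matrix.map_apply, Matrix.sum_apply, vecMulVec_apply]
  -- the polynomial is nonzero
  have hP0 : P ≠ 0 := by
    intro h
    -- witness
    have hcard : Fintype.card (Fin i) ≤ Fintype.card ↥(Finset.univ.erase k) := by
      rw [Fintype.card_coe, Finset.card_erase_of_mem (Finset.mem_univ k)]
      simpa using hi2
    obtain ⟨g⟩ := Function.Embedding.nonempty_of_card_le hcard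
    set f : Fin i → Fin n := fun j => (g j : Fin n) with hf
    have hfinj : Function.Injective f := fun a b hab => g.injective (Subtype.ext hab)
    have hfmem : ∀ j, f j ∈ Finset.univ.erase k := fun j => (g j).2
    set w₀ : Fin n → Fin i → ℝ :=
      fun l => if h : ∃ j, f j = l then Pi.single (Classical.choose h) (1:ℝ) else 0 with hw₀
    have hw₀f : ∀ j, w₀ (f j) = Pi.single j 1 := by
      intro j
      have hex : ∃ j', f j' = f j := ⟨j, rfl⟩
      have : Classical.choose hex = j := hfinj (Classical.choose_spec hex)
      simp only [hw₀, dif_pos hex, this]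
    have hsum : (∑ l ∈ Finset.univ.erase k, vecMulVec (w₀ l) (w₀ l))
        = (1 : Matrix (Fin i) (Fin i) ℝ) := by
      have himg : Finset.image f Finset.univ ⊆ Finset.univ.erase k := by
        intro l hl
        obtain ⟨j, _, rfl⟩ := Finset.mem_image.mp hl
        exact hfmem j
      have hzero : ∀ l ∈ Finset.univ.erase k, l ∉ Finset.image f Finset.univ →
          vecMulVec (w₀ l) (w₀ l) = 0 := by
        intro l _ hl
        have hwl : w₀ l = 0 := by
          have hne : ¬ ∃ j, f j = l := by
            rintro ⟨j, hj⟩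
            exact hl (Finset.mem_image.mpr ⟨j, Finset.mem_univ j, hj⟩)
          simp only [hw₀]
          rw [dif_neg hne]
        rw [hwl]
        ext a b
        simp [vecMulVec_apply]
      rw [← Finset.sum_subset himg hzero,
        Finset.sum_image (fun a _ b _ hab => hfinj hab)]
      simp_rw [hw₀f]
      exact sum_single_outer i
    have h1 : MvPolynomial.eval (fun z : Fin n × Fin i => w₀ z.1 z.2) P = 1 := by
      rw [hevalP, hsum, Matrix.det_one]
    rw [h, map_zero] at h1
    exact zero_ne_one h1
  have hnull := gaussianPi_null_poly2 i n P hP0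
  rw [ae_iff]
  refine measure_mono_null ?_ hnull
  intro w hw
  simp only [Set.mem_setOf_eq] at hw ⊢
  by_contra hne
  exact hw (posDef_of_posSemidef_det_ne_zero (sum_vecMulVec_posSemidef w _)
    (by rw [← hevalP]; exact fun hz => hne (hz ▸ rfl) ))


end AuxProof

noncomputable section FinalProof
/-- If `A = I_n` (so that all eigenvalues of `AAᵀ` are equal to `1`), then
`t_{i,k}(I_n) = (n − i)/n` for all `1 ≤ i ≤ n−1` and `1 ≤ k ≤ n`. -/
theorem tval_identity {n : ℕ} (i : ℕ) (hi1 : 1 ≤ i) (hi2 : i ≤ n - 1) (k : Fin n) :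
    tval i (fun _ : Fin n => (1 : ℝ)) k = ((n : ℝ) - (i : ℝ)) / (n : ℝ) := by
  classical
  have hnpos : 0 < n := k.pos
  have hn0 : (n : ℝ) ≠ 0 := Nat.cast_ne_zero.mpr hnpos.ne'
  set μ : Measure (Fin n → Fin i → ℝ) := Measure.pi fun _ : Fin n => gaussianPi i with hμ
  set W : (Fin n → Fin i → ℝ) → Matrix (Fin i) (Fin i) ℝ :=
    fun w => ∑ l, vecMulVec (w l) (w l) with hW
  set S : Fin n → (Fin n → Fin i → ℝ) → Matrix (Fin i) (Fin i) ℝ :=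
    fun k' w => ∑ l ∈ Finset.univ.erase k', vecMulVec (w l) (w l) with hS
  set g : Fin n → (Fin n → Fin i → ℝ) → ℝ :=
    fun k' w => w k' ⬝ᵥ ((W w)⁻¹).mulVec (w k') with hg
  have hWS : ∀ (k' : Fin n) w, W w = S k' w + vecMulVec (w k') (w k') := by
    intro k' w
    show (∑ l, vecMulVec (w l) (w l))
        = (∑ l ∈ Finset.univ.erase k', vecMulVec (w l) (w l)) + vecMulVec (w k') (w k')
    rw [← Finset.sum_erase_add _ _ (Finset.mem_univ k')]
  -- measurability
  have hWentry : ∀ a b, Measurable fun w : Fin n → Fin i → ℝ => W w a b := by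
    intro a b
    simp only [hW, Matrix.sum_apply, vecMulVec_apply]
    refine Finset.measurable_sum _ fun l _ => ?_
    exact (((measurable_pi_apply a).comp (measurable_pi_apply l) : Measurable fun w : Fin n → Fin i → ℝ => w l a)).mul
      (((measurable_pi_apply b).comp (measurable_pi_apply l) : Measurable fun w : Fin n → Fin i → ℝ => w l b))
  have hmeasg : ∀ k' : Fin n, Measurable (g k') := fun k' => measurable_dot_inv hWentry k'
  -- the good event
  have hae : ∀ᵐ w ∂μ, ∀ k' : Fin n, (S k' w).PosDef :=
    ae_all_iff.mpr fun k' => ae_posDef_erase hi2 k'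
  -- bound and identities on the good event
  have hbound : ∀ (w : Fin n → Fin i → ℝ), (∀ k' : Fin n, (S k' w).PosDef) →
      ∀ k' : Fin n, 0 ≤ g k' w ∧ g k' w ≤ 1 := by
    intro w hw k'
    have hSk := hw k'
    have hq0 : 0 ≤ w k' ⬝ᵥ ((S k' w)⁻¹).mulVec (w k') := dot_inv_nonneg hSk (w k')
    have hsh := sherman_scalar hSk (w k')
    rw [← hWS k' w] at hsh
    have hle : (1 + w k' ⬝ᵥ ((S k' w)⁻¹).mulVec (w k'))⁻¹ ≤ 1 := by
      rw [inv_le_one_iff₀]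
      right; linarith
    have hpos : 0 < (1 + w k' ⬝ᵥ ((S k' w)⁻¹).mulVec (w k'))⁻¹ := by positivity
    constructor
    · have : g k' w = 1 - (1 + w k' ⬝ᵥ ((S k' w)⁻¹).mulVec (w k'))⁻¹ := by
        rw [hsh]; ring
      rw [this]; linarith
    · have : g k' w = 1 - (1 + w k' ⬝ᵥ ((S k' w)⁻¹).mulVec (w k'))⁻¹ := by
        rw [hsh]; ring
      rw [this]; linarith
  -- integrability
  have hInt : ∀ k' : Fin n, Integrable (g k') μ := by
    intro k'
    refine Integrable.mono' (integrable_const 1) (hmeasg k').aestronglyMeasurable ?_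
    filter_upwards [hae] with w hw
    obtain ⟨h0, h1⟩ := hbound w hw k'
    rw [Real.norm_eq_abs, abs_le]
    constructor <;> linarith
  -- exchangeability
  have hsym : ∀ k' : Fin n, ∫ w, g k' w ∂μ = ∫ w, g k w ∂μ := by
    intro k'
    set σ : Equiv.Perm (Fin n) := Equiv.swap k' k with hσ
    have hmp := measurePreserving_piCongrLeft (fun _ : Fin n => gaussianPi i) σ
    set e := MeasurableEquiv.piCongrLeft (fun _ : Fin n => (Fin i → ℝ)) σ with he
    have hew : ∀ (w : Fin n → Fin i → ℝ) (a : Fin n), e w a = w (σ.symm a) := by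
      intro w a
      have h1 : e w (σ (σ.symm a)) = w (σ.symm a) :=
        Equiv.piCongrLeft_apply_apply (fun _ : Fin n => (Fin i → ℝ)) σ w (σ.symm a)
      rwa [Equiv.apply_symm_apply] at h1
    have hco : ∀ w, g k' (e w) = g k w := by
      intro w
      have hWe : W (e w) = W w := by
        rw [hW]
        simp only [hew]
        exact Equiv.sum_comp σ.symm fun l => vecMulVec (w l) (w l)
      have hk' : e w k' = w k := by
        rw [hew w k', hσ, Equiv.symm_swap, Equiv.swap_apply_left]
      rw [hg]
      simp only [hWe, hk']
    calc ∫ w, g k' w ∂μ = ∫ w, g k' (e w) ∂μ := by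
          rw [hmp.integral_comp e.measurableEmbedding]
      _ = ∫ w, g k w ∂μ := by simp_rw [hco]
  -- the sum identity
  have hsumae : ∀ᵐ w ∂μ, ∑ k' : Fin n, g k' w = (i : ℝ) := by
    filter_upwards [hae] with w hw
    have hWpd : (W w).PosDef := by
      rw [hWS k w]
      exact posDef_add_vecMulVec (hw k) (w k)
    have htr : ∀ k' : Fin n, g k' w = ((W w)⁻¹ * vecMulVec (w k') (w k')).trace := by
      intro k'
      rw [hg]
      exact dotProduct_mulVec_eq_trace _ _
    rw [Finset.sum_congr rfl fun k' _ => htr k']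
    rw [← Matrix.trace_sum, ← Finset.mul_sum]
    have hWw : (∑ l, vecMulVec (w l) (w l)) = W w := rfl
    rw [hWw, Matrix.nonsing_inv_mul _ (isUnit_iff_ne_zero.mpr hWpd.det_pos.ne')]
    simp [Matrix.trace_one]
  have hsumint : ∑ k' : Fin n, ∫ w, g k' w ∂μ = (i : ℝ) := by
    rw [← integral_finset_sum _ fun k' _ => hInt k']
    rw [integral_congr_ae hsumae]
    simp
  have hgk : ∫ w, g k w ∂μ = (i : ℝ) / (n : ℝ) := by
    have h1 : ∑ k' : Fin n, ∫ w, g k' w ∂μ = (n : ℝ) * ∫ w, g k w ∂μ := by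
      rw [Finset.sum_congr rfl fun k' _ => hsym k']
      rw [Finset.sum_const, Finset.card_univ, Fintype.card_fin, nsmul_eq_mul]
    rw [h1] at hsumint
    field_simp at hsumint ⊢
    linarith
  -- rewrite tval
  have htv : tval i (fun _ : Fin n => (1 : ℝ)) k = ∫ w, (1 - g k w) ∂μ := by
    rw [tval]
    refine integral_congr_ae ?_
    filter_upwards [hae] with w hw
    have hSk := hw k
    have hsh := sherman_scalar hSk (w k)
    rw [← hWS k w] at hsh
    simp only [one_smul, one_mul]
    rw [← hS, ← hμ] at *
    calc (1 + w k ⬝ᵥ ((∑ l ∈ Finset.univ.erase k, vecMulVec (w l) (w l))⁻¹).mulVec (w k))⁻¹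
        = (1 + w k ⬝ᵥ ((S k w)⁻¹).mulVec (w k))⁻¹ := by rw [hS]
      _ = 1 - g k w := hsh
  rw [htv, integral_sub (integrable_const 1) (hInt k), hgk]
  simp only [integral_const, measure_univ, probReal_univ, ENNReal.toReal_one, smul_eq_mul, one_mul]
  field_simp

end FinalProof
end
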